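/- Let F be a spread of a hyperplane S of PG(4,q) (a set of q^2+1 pairwise skew lines partitioning the points of S). Let r ∈ F, and let M be a set of q+1 pairwise skew lines of PG(4,q), none contained in S, each meeting r, such that each line of M is disjoint from every line of F \ {r}. Then (F \ {r}) ∪ M is a maximal partial spread of PG(4,q) of size q^2+q+1. -/

import Mathlib

open Submodule Module

/-- A partial spread of PG(4,q): a set of pairwise disjoint (skew) lines. -/
def IsPartialSpread (F : Type) [Field F] (L : Set (Submodule F (Fin 5 → F))) : Prop :=
  (∀ ℓ ∈ L, Module.finrank F ℓ = 2) ∧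
  ∀ ℓ₁ ∈ L, ∀ ℓ₂ ∈ L, ℓ₁ ≠ ℓ₂ → ℓ₁ ⊓ ℓ₂ = ⊥

/-- A maximal partial spread: no further line can be added. -/
def IsMaximalPartialSpread (F : Type) [Field F] (L : Set (Submodule F (Fin 5 → F))) : Prop :=
  IsPartialSpread F L ∧
  ∀ m : Submodule F (Fin 5 → F), Module.finrank F m = 2 → m ∉ L → ∃ ℓ ∈ L, m ⊓ ℓ ≠ ⊥

/-- Let F be a spread of a hyperplane S of PG(4,q). Let r ∈ F, and M a set of
q+1 pairwise skew lines, none in S, each meeting r, each disjoint from every line of F \ {r}.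
Then (F \ {r}) ∪ M is a maximal partial spread of PG(4,q) of size q^2+q+1. -/
theorem stmt4 (q : ℕ) (F : Type) [Field F] [Fintype F] (hF : Fintype.card F = q)
    (S : Submodule F (Fin 5 → F)) (hS : finrank F S = 4)
    (Fs : Set (Submodule F (Fin 5 → F)))
    (hFsline : ∀ ℓ ∈ Fs, finrank F ℓ = 2) (hFsS : ∀ ℓ ∈ Fs, ℓ ≤ S)
    (hFsskew : ∀ ℓ₁ ∈ Fs, ∀ ℓ₂ ∈ Fs, ℓ₁ ≠ ℓ₂ → ℓ₁ ⊓ ℓ₂ = ⊥)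
    (hFscover : ∀ v ∈ S, v ≠ 0 → ∃ ℓ ∈ Fs, v ∈ ℓ)
    (hFscard : Fs.ncard = q ^ 2 + 1)
    (r : Submodule F (Fin 5 → F)) (hrFs : r ∈ Fs)
    (M : Set (Submodule F (Fin 5 → F))) (hMcard : M.ncard = q + 1)
    (hMline : ∀ ℓ ∈ M, finrank F ℓ = 2)
    (hMskew : ∀ ℓ₁ ∈ M, ∀ ℓ₂ ∈ M, ℓ₁ ≠ ℓ₂ → ℓ₁ ⊓ ℓ₂ = ⊥)
    (hMnotS : ∀ ℓ ∈ M, ¬ ℓ ≤ S)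
    (hMmeet : ∀ ℓ ∈ M, ℓ ⊓ r ≠ ⊥)
    (hMdisj : ∀ ℓ ∈ M, ∀ ℓ' ∈ Fs \ {r}, ℓ ⊓ ℓ' = ⊥) :
    IsMaximalPartialSpread F ((Fs \ {r}) ∪ M) ∧
    ((Fs \ {r}) ∪ M).ncard = q ^ 2 + q + 1 := by
  classical
  have hq : 2 ≤ q := hF ▸ Fintype.one_lt_card
  have hMfin : M.Finite := Set.finite_of_ncard_ne_zero (by omega)
  have hFsfin : Fs.Finite := Set.finite_of_ncard_ne_zero (by omega)
  have hdisj : Disjoint (Fs \ {r}) M := by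
    rw [Set.disjoint_left]
    rintro ℓ ⟨hℓFs, -⟩ hℓM
    exact hMnotS ℓ hℓM (hFsS ℓ hℓFs)
  -- each ℓ' ∈ M meets r in a 1-dim subspace
  have hdim1 : ∀ ℓ' ∈ M, finrank F (ℓ' ⊓ r : Submodule F (Fin 5 → F)) = 1 := by
    intro ℓ' hℓ'
    have h1 : 1 ≤ finrank F (ℓ' ⊓ r : Submodule F (Fin 5 → F)) := by
      rw [Nat.one_le_iff_ne_zero]
      intro h0
      exact hMmeet ℓ' hℓ' (Submodule.finrank_eq_zero.mp h0)
    have h2 : finrank F (ℓ' ⊓ r : Submodule F (Fin 5 → F)) ≤ 2 := by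
      simpa [hMline ℓ' hℓ'] using Submodule.finrank_mono (inf_le_left : ℓ' ⊓ r ≤ ℓ')
    by_contra hne
    have h3 : finrank F (ℓ' ⊓ r : Submodule F (Fin 5 → F)) = 2 := by omega
    have heq : ℓ' ⊓ r = ℓ' :=
      eq_of_le_of_finrank_eq inf_le_left (by rw [h3, hMline ℓ' hℓ'])
    exact hMnotS ℓ' hℓ' (le_trans (heq ▸ inf_le_right) (hFsS r hrFs))
  -- the lines of M cover every nonzero point of r
  have key : ∀ v ∈ r, v ≠ 0 → ∃ ℓ' ∈ M, v ∈ ℓ' := by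
    intro v hv hv0
    set Tf : Submodule F (Fin 5 → F) → Finset (Fin 5 → F) :=
      fun ℓ' => ((ℓ' ⊓ r : Submodule F (Fin 5 → F)) : Set (Fin 5 → F)).toFinset \ {0} with hTf
    have hTcard : ∀ ℓ' ∈ M, (Tf ℓ').card = q - 1 := by
      intro ℓ' hℓ'
      have hc : ((ℓ' ⊓ r : Submodule F (Fin 5 → F)) : Set (Fin 5 → F)).toFinset.card = q := by
        rw [← Set.ncard_eq_toFinset_card', ← Nat.card_coe_set_eq]
        have h1 := Module.card_eq_pow_finrank (K := F) (V := (ℓ' ⊓ r : Submodule F (Fin 5 → F)))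
        rw [hdim1 ℓ' hℓ', hF, pow_one] at h1
        have h2 : Nat.card (ℓ' ⊓ r : Submodule F (Fin 5 → F)) = q := by
          rw [Nat.card_eq_fintype_card]; exact h1
        exact h2
      rw [hTf]
      rw [Finset.card_sdiff_of_subset (by simp [Submodule.zero_mem]), hc, Finset.card_singleton]
    have hTdisj : ∀ x ∈ hMfin.toFinset, ∀ y ∈ hMfin.toFinset, x ≠ y →
        Disjoint (Tf x) (Tf y) := by
      intro x hx y hy hxy
      rw [Set.Finite.mem_toFinset] at hx hy
      rw [Finset.disjoint_left]
      intro a ha ha'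
      simp only [hTf, Finset.mem_sdiff, Set.mem_toFinset, SetLike.mem_coe,
        Finset.mem_singleton] at ha ha'
      have : a ∈ x ⊓ y := ⟨ha.1.1, ha'.1.1⟩
      rw [hMskew x hx y hy hxy] at this
      exact ha.2 this
    have hbU : (hMfin.toFinset.biUnion Tf).card = (q + 1) * (q - 1) := by
      rw [Finset.card_biUnion hTdisj]
      rw [Finset.sum_congr rfl (fun ℓ' hℓ' => hTcard ℓ' (Set.Finite.mem_toFinset hMfin |>.mp hℓ'))]
      rw [Finset.sum_const, smul_eq_mul]
      congr 1
      rw [← hMcard, Set.ncard_eq_toFinset_card _ hMfin]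
    have hsub : hMfin.toFinset.biUnion Tf ⊆ (r : Set (Fin 5 → F)).toFinset \ {0} := by
      intro a ha
      rw [Finset.mem_biUnion] at ha
      obtain ⟨ℓ', hℓ', ha⟩ := ha
      simp only [hTf, Finset.mem_sdiff, Set.mem_toFinset, SetLike.mem_coe,
        Finset.mem_singleton] at ha ⊢
      exact ⟨ha.1.2, ha.2⟩
    have hrcard : ((r : Set (Fin 5 → F)).toFinset \ {0}).card = q ^ 2 - 1 := by
      have hc : (r : Set (Fin 5 → F)).toFinset.card = q ^ 2 := by
        rw [← Set.ncard_eq_toFinset_card', ← Nat.card_coe_set_eq]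
        have h1 := Module.card_eq_pow_finrank (K := F) (V := r)
        rw [hFsline r hrFs, hF] at h1
        have h2 : Nat.card r = q ^ 2 := by
          rw [Nat.card_eq_fintype_card]; exact h1
        exact h2
      rw [Finset.card_sdiff_of_subset (by simp [Submodule.zero_mem]), hc, Finset.card_singleton]
    have harith : (q + 1) * (q - 1) = q ^ 2 - 1 := by
      obtain ⟨k, rfl⟩ : ∃ k, q = k + 2 := ⟨q - 2, by omega⟩
      have h1 : (k + 2 + 1) * (k + 2 - 1) = k ^ 2 + 4 * k + 3 := by
        have : k + 2 - 1 = k + 1 := by omega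
        rw [this]; ring
      have h2 : (k + 2) ^ 2 = k ^ 2 + 4 * k + 4 := by ring
      omega
    have heq : hMfin.toFinset.biUnion Tf = (r : Set (Fin 5 → F)).toFinset \ {0} :=
      Finset.eq_of_subset_of_card_le hsub (by rw [hrcard, hbU, harith])
    have hvmem : v ∈ hMfin.toFinset.biUnion Tf := by
      rw [heq]
      simp [hv, hv0]
    rw [Finset.mem_biUnion] at hvmem
    obtain ⟨ℓ', hℓ', hvℓ'⟩ := hvmem
    rw [Set.Finite.mem_toFinset] at hℓ'
    simp only [hTf, Finset.mem_sdiff, Set.mem_toFinset, SetLike.mem_coe] at hvℓ'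
    exact ⟨ℓ', hℓ', hvℓ'.1.1⟩
  refine ⟨⟨⟨?_, ?_⟩, ?_⟩, ?_⟩
  · rintro ℓ (⟨hℓ, -⟩ | hℓ)
    · exact hFsline ℓ hℓ
    · exact hMline ℓ hℓ
  · rintro ℓ₁ (⟨h₁, h₁r⟩ | h₁) ℓ₂ h₂ hne
    · rcases h₂ with ⟨h₂, h₂r⟩ | h₂
      · exact hFsskew ℓ₁ h₁ ℓ₂ h₂ hne
      · rw [inf_comm]
        exact hMdisj ℓ₂ h₂ ℓ₁ ⟨h₁, h₁r⟩
    · rcases h₂ with ⟨h₂, h₂r⟩ | h₂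
      · exact hMdisj ℓ₁ h₁ ℓ₂ ⟨h₂, h₂r⟩
      · exact hMskew ℓ₁ h₁ ℓ₂ h₂ hne
  · intro m hm2 hmnot
    have hfr5 : finrank F (Fin 5 → F) = 5 := by simp
    have hinf : (m ⊓ S : Submodule F (Fin 5 → F)) ≠ ⊥ := by
      intro hbot
      have := Submodule.finrank_sup_add_finrank_inf_eq m S
      rw [hbot, finrank_bot, hm2, hS] at this
      have hle : finrank F (m ⊔ S : Submodule F (Fin 5 → F)) ≤ 5 := by
        have h := Submodule.finrank_le (m ⊔ S)
        omega
      omega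
    obtain ⟨v, hv, hv0⟩ := Submodule.ne_bot_iff _ |>.mp hinf
    obtain ⟨hvm, hvS⟩ := Submodule.mem_inf.mp hv
    obtain ⟨ℓ, hℓFs, hvℓ⟩ := hFscover v hvS hv0
    by_cases hℓr : ℓ = r
    · subst hℓr
      obtain ⟨ℓ', hℓ'M, hvℓ'⟩ := key v hvℓ hv0
      refine ⟨ℓ', Or.inr hℓ'M, ?_⟩
      rw [Submodule.ne_bot_iff]
      exact ⟨v, Submodule.mem_inf.mpr ⟨hvm, hvℓ'⟩, hv0⟩
    · refine ⟨ℓ, Or.inl ⟨hℓFs, hℓr⟩, ?_⟩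
      rw [Submodule.ne_bot_iff]
      exact ⟨v, Submodule.mem_inf.mpr ⟨hvm, hvℓ⟩, hv0⟩
  · rw [Set.ncard_union_eq hdisj hFsfin.diff hMfin,
      Set.ncard_diff_singleton_of_mem hrFs, hFscard, hMcard]
    omega
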